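/- Let Ω₁,…,Ωₙ (n≥2) be closed subsets of a Banach space X, x̄ ∈ ∩_{i=1}^n Ωᵢ, a₁,…,aₙ ∈ X, ρ ∈ (0,+∞], ε > 0 and φ ∈ 𝒞. Let λ > 0 and η ∈ (0,ρ) be such that ∩_{i=1}^{n}(Ωᵢ−aᵢ) ∩ B_ρ(x̄) = ∅ and φ(max_{1≤i≤n}‖aᵢ‖) < φ(d(Ω₁−a₁,…,Ωₙ−aₙ, B_η(x̄))) + ε. Then there exist points ωᵢ ∈ Ωᵢ ∩ B_λ(x̄) (i=1,…,n) and x ∈ B_η(x̄) such that: (a) 0 < max_{1≤i≤n}‖x+aᵢ−ωᵢ‖ ≤ max_{1≤i≤n}‖aᵢ‖; and (b) sup over all uᵢ ∈ Ωᵢ (i=1,…,n) and u ∈ B_η(x̄) with (u₁,…,uₙ,u) ≠ (ω₁,…,ωₙ,x) of [φ(max_{1≤i≤n}‖x+aᵢ−ωᵢ‖) − φ(max_{1≤i≤n}‖u+aᵢ−uᵢ‖)] / ‖(u₁−ω₁,…,uₙ−ωₙ,u−x)‖_{λ,η} is strictly less than ε. -/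

import Mathlib

open Filter
open scoped ENNReal

theorem my_ekeland {Y : Type*} [MetricSpace Y] [CompleteSpace Y] {f : Y → ℝ}
    (hf : Continuous f) {m : ℝ} (hm : ∀ y, m ≤ f y) {c : ℝ} (hc : 0 < c) (x₀ : Y) :
    ∃ x, f x + c * dist x x₀ ≤ f x₀ ∧ ∀ y, y ≠ x → f x < f y + c * dist y x := by
  set S : Y → Set Y := fun x => {y | f y + c * dist y x ≤ f x} with hS
  have hSself : ∀ x, x ∈ S x := by intro x; simp [hS]
  have hStrans : ∀ x y z, y ∈ S x → z ∈ S y → z ∈ S x := by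
    intro x y z hy hz
    simp only [hS, Set.mem_setOf_eq] at *
    nlinarith [dist_triangle z y x, hc.le]
  have step : ∀ (k : ℕ) (x : Y), ∃ x', x' ∈ S x ∧ ∀ y ∈ S x, f x' ≤ f y + (1/2 : ℝ)^k := by
    intro k x
    have hne : (f '' S x).Nonempty := ⟨f x, x, hSself x, rfl⟩
    have hbdd : BddBelow (f '' S x) := ⟨m, by rintro _ ⟨y, _, rfl⟩; exact hm y⟩
    obtain ⟨b, hb, hlt⟩ := Real.lt_sInf_add_pos hne (pow_pos (by norm_num : (0:ℝ) < 1/2) k)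
    obtain ⟨x', hx', rfl⟩ := hb
    refine ⟨x', hx', fun y hy => ?_⟩
    have : sInf (f '' S x) ≤ f y := csInf_le hbdd ⟨y, hy, rfl⟩
    linarith
  set F : ℕ → Y → Y := fun k x => Classical.choose (step k x) with hF
  set seq : ℕ → Y := fun k => Nat.rec x₀ F k with hseq
  have hseq0 : seq 0 = x₀ := rfl
  have hseqS : ∀ k, seq (k+1) = F k (seq k) := fun k => rfl
  have hseq1 : ∀ k, seq (k+1) ∈ S (seq k) := by
    intro k; rw [hseqS]; exact (Classical.choose_spec (step k (seq k))).1
  have hseq2 : ∀ k, ∀ y ∈ S (seq k), f (seq (k+1)) ≤ f y + (1/2:ℝ)^k := by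
    intro k; rw [hseqS]; exact (Classical.choose_spec (step k (seq k))).2
  have hchain : ∀ k j, k ≤ j → seq j ∈ S (seq k) := by
    intro k j hkj
    induction j, hkj using Nat.le_induction with
    | base => exact hSself _
    | succ j hkj ih => exact hStrans _ _ _ ih (hseq1 j)
  have hkey : ∀ k, ∀ z ∈ S (seq (k+1)), c * dist z (seq (k+1)) ≤ (1/2:ℝ)^k := by
    intro k z hz
    have h1 : z ∈ S (seq k) := hStrans _ _ _ (hseq1 k) hz
    have h2 := hseq2 k z h1
    simp only [hS, Set.mem_setOf_eq] at hz
    linarith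
  have hcauchy : CauchySeq seq := by
    refine cauchySeq_of_le_geometric (1/2) (max ((f x₀ - m)/c) (2/c)) (by norm_num) fun k => ?_
    rcases k with _ | k
    · rw [dist_comm, hseq0]
      have h := hseq1 0
      simp only [hS, Set.mem_setOf_eq, hseq0] at h
      have hm1 := hm (seq (0+1))
      have h2 : dist (seq (0+1)) x₀ ≤ (f x₀ - m)/c := by
        rw [le_div_iff₀ hc]; nlinarith
      calc dist (seq (0+1)) x₀ ≤ (f x₀ - m)/c := h2
        _ ≤ max ((f x₀ - m)/c) (2/c) := le_max_left _ _
        _ = max ((f x₀ - m)/c) (2/c) * (1/2:ℝ)^0 := by ring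
    · rw [dist_comm]
      have h := hkey k (seq (k+1+1)) (hchain (k+1) (k+1+1) (by omega))
      have h2 : dist (seq (k+1+1)) (seq (k+1)) ≤ (1/2:ℝ)^k / c := by
        rw [le_div_iff₀ hc]; nlinarith
      calc dist (seq (k+1+1)) (seq (k+1)) ≤ (1/2:ℝ)^k / c := h2
        _ = (2/c) * (1/2:ℝ)^(k+1) := by ring
        _ ≤ max ((f x₀ - m)/c) (2/c) * (1/2:ℝ)^(k+1) :=
            mul_le_mul_of_nonneg_right (le_max_right _ _) (by positivity)
  obtain ⟨xhat, hx⟩ := cauchySeq_tendsto_of_complete hcauchy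
  have hSclosed : ∀ x, IsClosed (S x) :=
    fun x => isClosed_le (hf.add (continuous_const.mul (continuous_id.dist continuous_const)))
      continuous_const
  have hmemS : ∀ k, xhat ∈ S (seq k) := by
    intro k
    exact (hSclosed (seq k)).mem_of_tendsto hx
      (eventually_atTop.mpr ⟨k, fun j hj => hchain k j hj⟩)
  have hfirst : f xhat + c * dist xhat x₀ ≤ f x₀ := by
    have := hmemS 0; rw [hseq0] at this; exact this
  refine ⟨xhat, hfirst, fun y hy => ?_⟩
  by_contra hcon
  push_neg at hcon
  have hyS : y ∈ S xhat := hcon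
  have hbound : ∀ k, c * dist y xhat ≤ 2 * (1/2:ℝ)^k := by
    intro k
    have h1 : c * dist y (seq (k+1)) ≤ (1/2:ℝ)^k :=
      hkey k y (hStrans _ _ _ (hmemS (k+1)) hyS)
    have h2 : c * dist xhat (seq (k+1)) ≤ (1/2:ℝ)^k := hkey k xhat (hmemS (k+1))
    nlinarith [dist_triangle y (seq (k+1)) xhat, dist_comm xhat (seq (k+1)),
      dist_triangle_right y xhat (seq (k+1)), hc.le]
  have hle0 : c * dist y xhat ≤ 0 := by
    have ht : Tendsto (fun k : ℕ => 2 * (1/2:ℝ)^k) atTop (nhds 0) := by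
      have := tendsto_pow_atTop_nhds_zero_of_lt_one (by norm_num : (0:ℝ) ≤ 1/2) (by norm_num)
      simpa using this.const_mul 2
    exact ge_of_tendsto' ht hbound
  have hd0 : dist y xhat ≤ 0 := by nlinarith [dist_nonneg (x := y) (y := xhat)]
  exact hy (dist_le_zero.mp hd0)

lemma continuous_isup_norm {Z X : Type*} [TopologicalSpace Z] [SeminormedAddCommGroup X]
    {n : ℕ} [Nonempty (Fin n)] (G : Fin n → Z → X) (hG : ∀ i, Continuous (G i)) :
    Continuous fun z => ⨆ i, ‖G i z‖ := by
  have h : (fun z => ⨆ i, ‖G i z‖)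
      = fun z => Finset.univ.sup' Finset.univ_nonempty (fun i => ‖G i z‖) := by
    funext z; rw [Finset.sup'_univ_eq_ciSup]
  rw [h]
  exact Continuous.finset_sup'_apply Finset.univ_nonempty fun i _ => (hG i).norm

/-- The nonintersect index `d(Ω₁,…,Ωₙ,Ω') = inf{ max_i ‖u' − uᵢ‖ : uᵢ ∈ Ωᵢ, u' ∈ Ω' }`. -/
noncomputable def nonintersectIndex {X : Type*} [NormedAddCommGroup X] {n : ℕ}
    (Ω : Fin n → Set X) (Ω' : Set X) : ℝ :=
  sInf {r : ℝ | ∃ (u : Fin n → X) (u' : X),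
    (∀ i, u i ∈ Ω i) ∧ u' ∈ Ω' ∧ r = ⨆ i, ‖u' - u i‖}

set_option maxHeartbeats 2000000 in
/-- slope necessary conditions (global sup form) for the symmetric local
non-intersection property `⋂ᵢ(Ωᵢ−aᵢ) ∩ B_ρ(xbar) = ∅` (`ρ ∈ (0,+∞]`, modelled by
`ρ : ℝ≥0∞`, with `EMetric.ball xbar ⊤ = X`). -/
theorem stmt8 {X : Type*} [NormedAddCommGroup X] [NormedSpace ℝ X] [CompleteSpace X]
    {n : ℕ} (hn : 2 ≤ n) (Ω : Fin n → Set X)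
    (hΩ : ∀ i, IsClosed (Ω i))
    (xbar : X) (hxbar : ∀ i, xbar ∈ Ω i)
    (a : Fin n → X) (ρ : ℝ≥0∞) (hρ : 0 < ρ) (ε : ℝ) (hε : 0 < ε)
    (φ : ℝ → ℝ) (hφmono : StrictMonoOn φ (Set.Ici 0))
    (hφcont : ContinuousOn φ (Set.Ici 0)) (hφ0 : φ 0 = 0)
    (hφtop : Tendsto φ atTop atTop)
    (lam : ℝ) (hlam : 0 < lam) (eta : ℝ) (heta : 0 < eta)
    (hetaρ : ENNReal.ofReal eta < ρ)
    (hne : (⋂ i, (fun z => z - a i) '' Ω i) ∩ EMetric.ball xbar ρ = ∅)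
    (hd : φ (⨆ i, ‖a i‖) <
      φ (nonintersectIndex (fun i => (fun z => z - a i) '' Ω i)
          (Metric.ball xbar eta)) + ε) :
    ∃ (ω : Fin n → X) (x : X),
      (∀ i, ω i ∈ Ω i ∩ Metric.ball xbar lam) ∧ x ∈ Metric.ball xbar eta ∧
      0 < (⨆ i, ‖x + a i - ω i‖) ∧ (⨆ i, ‖x + a i - ω i‖) ≤ (⨆ i, ‖a i‖) ∧
      ∃ c < ε, ∀ (u : Fin n → X) (v : X), (∀ i, u i ∈ Ω i) →
        v ∈ Metric.ball xbar eta → ¬(u = ω ∧ v = x) →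
        φ (⨆ i, ‖x + a i - ω i‖) - φ (⨆ i, ‖v + a i - u i‖) ≤
          c * max (⨆ i, lam⁻¹ * ‖u i - ω i‖) (eta⁻¹ * ‖v - x‖) := by
  haveI : Nonempty (Fin n) := Fin.pos_iff_nonempty.mp (by omega)
  have hbddR : ∀ g : Fin n → ℝ, BddAbove (Set.range g) := fun g => (Set.finite_range g).bddAbove
  have hsupa0 : (0:ℝ) ≤ ⨆ i, ‖a i‖ := Real.iSup_nonneg fun i => norm_nonneg _
  set Ω' : Fin n → Set X := fun i => (fun z => z - a i) '' Ω i with hΩ'def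
  set d : ℝ := nonintersectIndex Ω' (Metric.ball xbar eta) with hddef
  set dset : Set ℝ := {r : ℝ | ∃ (u : Fin n → X) (u' : X),
    (∀ i, u i ∈ Ω' i) ∧ u' ∈ Metric.ball xbar eta ∧ r = ⨆ i, ‖u' - u i‖} with hdset
  have hdval : d = sInf dset := rfl
  have hdbdd : BddBelow dset := by
    refine ⟨0, ?_⟩
    rintro r ⟨u, u', _, _, rfl⟩
    exact Real.iSup_nonneg fun i => norm_nonneg _
  have hdle : ∀ (u : Fin n → X) (v : X), (∀ i, u i ∈ Ω i) → v ∈ Metric.ball xbar eta →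
      d ≤ ⨆ i, ‖v - (u i - a i)‖ := by
    intro u v hu hv
    rw [hdval]
    exact csInf_le hdbdd ⟨fun i => u i - a i, v, fun i => ⟨u i, hu i, rfl⟩, hv, rfl⟩
  have hd0 : 0 ≤ d := by
    rw [hdval]
    refine le_csInf ⟨⨆ i, ‖xbar - (xbar - a i)‖, fun i => xbar - a i, xbar,
      fun i => ⟨xbar, hxbar i, rfl⟩, Metric.mem_ball_self heta, rfl⟩ ?_
    rintro r ⟨u, u', _, _, rfl⟩
    exact Real.iSup_nonneg fun i => norm_nonneg _
  have hdlea : d ≤ ⨆ i, ‖a i‖ := by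
    have h := hdle (fun _ => xbar) xbar (fun i => hxbar i) (Metric.mem_ball_self heta)
    simpa [sub_sub_cancel] using h
  have hmonoOn : MonotoneOn φ (Set.Ici 0) := hφmono.monotoneOn
  -- extension of the d-lower bound to the closed ball
  have hdcb : ∀ (u : Fin n → X), (∀ i, u i ∈ Ω i) → ∀ v ∈ Metric.closedBall xbar eta,
      d ≤ ⨆ i, ‖v - (u i - a i)‖ := by
    intro u hu v hv
    have hsub : Metric.closedBall xbar eta ⊆
        {w : X | d ≤ ⨆ i, ‖w - (u i - a i)‖} := by
      rw [← closure_ball xbar (ne_of_gt heta)]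
      refine closure_minimal (fun w hw => hdle u w hu hw) ?_
      exact isClosed_le continuous_const
        (continuous_isup_norm (fun i w => w - (u i - a i))
          (fun i => continuous_id.sub continuous_const))
    exact hsub hv
  -- the ambient complete space
  set G : (Fin n → X) × X → ℝ :=
    fun q => ⨆ i, ‖(xbar + eta • q.2) + a i - (xbar + lam • q.1 i)‖ with hGdef
  have hGcont : Continuous G :=
    continuous_isup_norm (fun i (q : (Fin n → X) × X) => (xbar + eta • q.2) + a i - (xbar + lam • q.1 i))
      (fun i => by fun_prop)
  have hG0 : ∀ q, 0 ≤ G q := fun q => Real.iSup_nonneg fun i => norm_nonneg _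
  set D : Set ((Fin n → X) × X) := {p | (∀ i, xbar + lam • p.1 i ∈ Ω i) ∧ ‖p.2‖ ≤ 1}
    with hDdef
  have hDclosed : IsClosed D := by
    have h1 : IsClosed {p : (Fin n → X) × X | ∀ i, xbar + lam • p.1 i ∈ Ω i} := by
      have he : {p : (Fin n → X) × X | ∀ i, xbar + lam • p.1 i ∈ Ω i}
          = ⋂ i, (fun p : (Fin n → X) × X => xbar + lam • p.1 i) ⁻¹' Ω i := by
        ext p; simp [Set.mem_iInter]
      rw [he]
      exact isClosed_iInter fun i => (hΩ i).preimage (by fun_prop)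
    have h2 : IsClosed {p : (Fin n → X) × X | ‖p.2‖ ≤ 1} :=
      isClosed_le (by fun_prop) continuous_const
    exact h1.inter h2
  haveI : CompleteSpace D := hDclosed.completeSpace_coe
  set Fn : D → ℝ := fun p => φ (G p.1) with hFndef
  have hFcont : Continuous Fn :=
    hφcont.comp_continuous (hGcont.comp continuous_subtype_val) (fun p => hG0 _)
  -- lower bound
  have hFlb : ∀ p : D, φ d ≤ Fn p := by
    intro p
    have hp1 : ∀ i, xbar + lam • p.1.1 i ∈ Ω i := p.2.1
    have hp2 : ‖p.1.2‖ ≤ 1 := p.2.2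
    have hvmem : xbar + eta • p.1.2 ∈ Metric.closedBall xbar eta := by
      rw [Metric.mem_closedBall, dist_eq_norm]
      have he : xbar + eta • p.1.2 - xbar = eta • p.1.2 := by abel
      rw [he, norm_smul, Real.norm_eq_abs, abs_of_pos heta]
      nlinarith
    have hge : d ≤ G p.1 := by
      have h := hdcb (fun i => xbar + lam • p.1.1 i) hp1 (xbar + eta • p.1.2) hvmem
      have heq : (⨆ i, ‖(xbar + eta • p.1.2) - ((xbar + lam • p.1.1 i) - a i)‖) = G p.1 := by
        rw [hGdef]
        exact congrArg iSup (funext fun i => congrArg norm (by abel))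
      rwa [heq] at h
    exact hmonoOn (Set.mem_Ici.mpr hd0) (Set.mem_Ici.mpr (hG0 _)) hge
  -- base point
  have hx₀mem : ((0, 0) : (Fin n → X) × X) ∈ D :=
    ⟨fun i => by simpa using hxbar i, by simp⟩
  set x₀ : D := ⟨(0, 0), hx₀mem⟩ with hx₀def
  have hFx₀ : Fn x₀ = φ (⨆ i, ‖a i‖) := by
    rw [hFndef, hGdef]
    refine congrArg φ (congrArg iSup (funext fun i => congrArg norm ?_))
    show xbar + eta • (0:X) + a i - (xbar + lam • (0 : Fin n → X) i) = a i
    simp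
  set ε₀ : ℝ := φ (⨆ i, ‖a i‖) - φ d with hε₀def
  have hε₀0 : 0 ≤ ε₀ :=
    sub_nonneg.mpr (hmonoOn (Set.mem_Ici.mpr hd0) (Set.mem_Ici.mpr hsupa0) hdlea)
  have hε₀ε : ε₀ < ε := by rw [hε₀def]; linarith
  set c : ℝ := (ε₀ + ε) / 2 with hcdef
  have hc0 : 0 < c := by rw [hcdef]; linarith
  have hcε : c < ε := by rw [hcdef]; linarith
  have hε₀c : ε₀ < c := by rw [hcdef]; linarith
  obtain ⟨xhat, hE1, hE2⟩ := my_ekeland hFcont hFlb hc0 x₀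
  have hFle : Fn xhat ≤ Fn x₀ := by nlinarith [mul_nonneg hc0.le (dist_nonneg (x := xhat) (y := x₀))]
  have hdist1 : dist xhat x₀ < 1 := by
    have h1 : c * dist xhat x₀ ≤ ε₀ := by
      have h2 := hFlb xhat
      rw [hFx₀] at hE1
      rw [hε₀def]; linarith
    by_contra hge
    push_neg at hge
    have h3 : c ≤ c * dist xhat x₀ := le_mul_of_one_le_right hc0.le hge
    linarith
  have hmem1 : ∀ i, xbar + lam • xhat.1.1 i ∈ Ω i := xhat.2.1
  -- component distance bounds
  have hcomp1 : ∀ (z w : D) (i : Fin n), dist (z.1.1 i) (w.1.1 i) ≤ dist z w := by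
    intro z w i
    calc dist (z.1.1 i) (w.1.1 i) ≤ dist z.1.1 w.1.1 := dist_le_pi_dist _ _ i
      _ ≤ dist z.1 w.1 := by rw [Prod.dist_eq]; exact le_max_left _ _
      _ = dist z w := (Subtype.dist_eq z w).symm
  have hcomp2 : ∀ (z w : D), dist z.1.2 w.1.2 ≤ dist z w := by
    intro z w
    calc dist z.1.2 w.1.2 ≤ dist z.1 w.1 := by rw [Prod.dist_eq]; exact le_max_right _ _
      _ = dist z w := (Subtype.dist_eq z w).symm
  have hnorm1 : ∀ i, ‖xhat.1.1 i‖ < 1 := by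
    intro i
    have h := hcomp1 xhat x₀ i
    rw [hx₀def] at h
    simp only [dist_zero_right] at h
    calc ‖xhat.1.1 i‖ = dist (xhat.1.1 i) ((0:Fin n → X) i) := by simp
      _ ≤ dist xhat x₀ := hcomp1 xhat x₀ i
      _ < 1 := hdist1
  have hnorm2 : ‖xhat.1.2‖ < 1 := by
    calc ‖xhat.1.2‖ = dist xhat.1.2 ((0,0) : (Fin n → X) × X).2 := by simp
      _ ≤ dist xhat x₀ := hcomp2 xhat x₀
      _ < 1 := hdist1
  -- the candidate points
  refine ⟨fun i => xbar + lam • xhat.1.1 i, xbar + eta • xhat.1.2, ?_, ?_, ?_, ?_, c, hcε, ?_⟩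
  · intro i
    refine ⟨hmem1 i, ?_⟩
    rw [Metric.mem_ball, dist_eq_norm]
    have he : xbar + lam • xhat.1.1 i - xbar = lam • xhat.1.1 i := by abel
    rw [he, norm_smul, Real.norm_eq_abs, abs_of_pos hlam]
    nlinarith [hnorm1 i, norm_nonneg (xhat.1.1 i)]
  · rw [Metric.mem_ball, dist_eq_norm]
    have he : xbar + eta • xhat.1.2 - xbar = eta • xhat.1.2 := by abel
    rw [he, norm_smul, Real.norm_eq_abs, abs_of_pos heta]
    nlinarith [hnorm2, norm_nonneg xhat.1.2]
  · -- positivity of the sup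
    by_contra hle
    push_neg at hle
    have hzero : ∀ i, (xbar + eta • xhat.1.2) + a i - (xbar + lam • xhat.1.1 i) = 0 := by
      intro i
      refine norm_le_zero_iff.mp (le_trans ?_ hle)
      exact le_ciSup (f := fun j => ‖(xbar + eta • (xhat : (Fin n → X) × X).2) + a j
        - (xbar + lam • (xhat : (Fin n → X) × X).1 j)‖) (hbddR _) i
    have hmemInt : (xbar + eta • xhat.1.2) ∈ (⋂ i, Ω' i) ∩ EMetric.ball xbar ρ := by
      constructor
      · refine Set.mem_iInter.mpr fun i => ?_
        refine ⟨xbar + lam • xhat.1.1 i, hmem1 i, ?_⟩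
        show xbar + lam • xhat.1.1 i - a i = xbar + eta • xhat.1.2
        have h2 : xbar + lam • xhat.1.1 i - a i - (xbar + eta • xhat.1.2)
            = -((xbar + eta • xhat.1.2) + a i - (xbar + lam • xhat.1.1 i)) := by abel
        rw [← sub_eq_zero, h2, hzero i, neg_zero]
      · show edist _ xbar < ρ; rw [edist_dist]
        have hblt : dist (xbar + eta • xhat.1.2) xbar < eta := by
          rw [dist_eq_norm]
          have he : xbar + eta • xhat.1.2 - xbar = eta • xhat.1.2 := by abel
          rw [he, norm_smul, Real.norm_eq_abs, abs_of_pos heta]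
          nlinarith [hnorm2, norm_nonneg xhat.1.2]
        calc ENNReal.ofReal (dist (xbar + eta • xhat.1.2) xbar)
            ≤ ENNReal.ofReal eta := ENNReal.ofReal_le_ofReal hblt.le
          _ < ρ := hetaρ
    rw [hΩ'def] at hmemInt
    exact Set.eq_empty_iff_forall_notMem.mp hne _ hmemInt
  · -- ≤ sup ‖a i‖
    have h : φ (G xhat.1) ≤ φ (⨆ i, ‖a i‖) := by rw [← hFx₀]; exact hFle
    have := (hφmono.le_iff_le (Set.mem_Ici.mpr (hG0 xhat.1)) (Set.mem_Ici.mpr hsupa0)).mp h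
    exact this
  · -- the variational inequality
    intro u v hu hv hne'
    have hymem : ((fun i => lam⁻¹ • (u i - xbar), eta⁻¹ • (v - xbar)) : (Fin n → X) × X) ∈ D := by
      constructor
      · intro i
        have : xbar + lam • (lam⁻¹ • (u i - xbar)) = u i := by
          rw [smul_inv_smul₀ (ne_of_gt hlam)]; abel
        rw [this]; exact hu i
      · rw [norm_smul, Real.norm_eq_abs, abs_of_pos (inv_pos.mpr heta)]
        rw [Metric.mem_ball, dist_eq_norm] at hv
        rw [inv_mul_le_iff₀ heta, mul_one]
        exact hv.le
    set y : D := ⟨(fun i => lam⁻¹ • (u i - xbar), eta⁻¹ • (v - xbar)), hymem⟩ with hydef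
    have hyne : y ≠ xhat := by
      intro heq
      apply hne'
      have hval : (y : (Fin n → X) × X) = xhat.1 := congrArg Subtype.val heq
      have h1 : (fun i => lam⁻¹ • (u i - xbar)) = xhat.1.1 := congrArg Prod.fst hval
      have h2 : eta⁻¹ • (v - xbar) = xhat.1.2 := congrArg Prod.snd hval
      constructor
      · funext i
        have := congrFun h1 i
        have h3 : lam • (lam⁻¹ • (u i - xbar)) = lam • xhat.1.1 i := congrArg (lam • ·) this
        rw [smul_inv_smul₀ (ne_of_gt hlam)] at h3
        rw [← h3]; abel
      · have h3 : eta • (eta⁻¹ • (v - xbar)) = eta • xhat.1.2 := congrArg (eta • ·) h2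
        rw [smul_inv_smul₀ (ne_of_gt heta)] at h3
        rw [← h3]; abel
    have hE := hE2 y hyne
    have hFy : Fn y = φ (⨆ i, ‖v + a i - u i‖) := by
      rw [hFndef, hGdef]
      refine congrArg φ (congrArg iSup (funext fun i => congrArg norm ?_))
      show xbar + eta • (eta⁻¹ • (v - xbar)) + a i - (xbar + lam • (lam⁻¹ • (u i - xbar))) = _
      rw [smul_inv_smul₀ (ne_of_gt heta), smul_inv_smul₀ (ne_of_gt hlam)]
      abel
    have hdistle : dist y xhat ≤
        max (⨆ i, lam⁻¹ * ‖u i - (xbar + lam • xhat.1.1 i)‖)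
          (eta⁻¹ * ‖v - (xbar + eta • xhat.1.2)‖) := by
      rw [Subtype.dist_eq, Prod.dist_eq]
      refine max_le_max ?_ ?_
      · rw [dist_pi_le_iff (Real.iSup_nonneg fun i =>
          mul_nonneg (inv_nonneg.mpr hlam.le) (norm_nonneg _))]
        intro i
        have heq : lam⁻¹ • (u i - xbar) - xhat.1.1 i
            = lam⁻¹ • (u i - (xbar + lam • xhat.1.1 i)) := by
          conv_rhs => rw [show u i - (xbar + lam • xhat.1.1 i)
              = (u i - xbar) - lam • xhat.1.1 i from by abel,
            smul_sub, inv_smul_smul₀ (ne_of_gt hlam)]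
        calc dist ((y : (Fin n → X) × X).1 i) (xhat.1.1 i)
            = ‖lam⁻¹ • (u i - xbar) - xhat.1.1 i‖ := by rw [dist_eq_norm]
          _ = lam⁻¹ * ‖u i - (xbar + lam • xhat.1.1 i)‖ := by
              rw [heq, norm_smul, Real.norm_eq_abs, abs_of_pos (inv_pos.mpr hlam)]
          _ ≤ _ := le_ciSup (f := fun j => lam⁻¹ * ‖u j
              - (xbar + lam • (xhat : (Fin n → X) × X).1 j)‖) (hbddR _) i
      · have heq : eta⁻¹ • (v - xbar) - xhat.1.2
            = eta⁻¹ • (v - (xbar + eta • xhat.1.2)) := by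
          conv_rhs => rw [show v - (xbar + eta • xhat.1.2)
              = (v - xbar) - eta • xhat.1.2 from by abel,
            smul_sub, inv_smul_smul₀ (ne_of_gt heta)]
        calc dist ((y : (Fin n → X) × X).2) xhat.1.2
            = ‖eta⁻¹ • (v - xbar) - xhat.1.2‖ := by rw [dist_eq_norm]
          _ = eta⁻¹ * ‖v - (xbar + eta • xhat.1.2)‖ := by
              rw [heq, norm_smul, Real.norm_eq_abs, abs_of_pos (inv_pos.mpr heta)]
          _ ≤ eta⁻¹ * ‖v - (xbar + eta • xhat.1.2)‖ := le_refl _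
    have hmul : c * dist y xhat ≤
        c * max (⨆ i, lam⁻¹ * ‖u i - (xbar + lam • xhat.1.1 i)‖)
          (eta⁻¹ * ‖v - (xbar + eta • xhat.1.2)‖) :=
      mul_le_mul_of_nonneg_left hdistle hc0.le
    rw [hFy] at hE
    have hFxhat : Fn xhat = φ (⨆ i, ‖(xbar + eta • xhat.1.2) + a i - (xbar + lam • xhat.1.1 i)‖) := rfl
    rw [hFxhat] at hE
    linarith
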